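/- arXiv:2511.14177 — 2 statements merged into one kernel-verified Lean document; each statement's English description precedes it below -/
import Mathlib

section
/- For all integers N ≥ 2 and k ≥ 0, the alternating binomial sum ∑_{s=0}^{N} (-1)^s C(N,s) (s+k)!/(N+s+k-1)! equals k!(2N-2)!/((N-2)!(2N+k-1)!). -/
open Finset intervalIntegral

lemma beta_step (m n : ℕ) :
    ∫ x in (0:ℝ)..1, x ^ m * (1 - x) ^ (n + 1)
      = ((n + 1 : ℝ) / (m + 1)) * ∫ x in (0:ℝ)..1, x ^ (m + 1) * (1 - x) ^ n := by
  have hu : ∀ x ∈ Set.uIcc (0:ℝ) 1,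
      HasDerivAt (fun x : ℝ => (1 - x) ^ (n + 1)) (-((n + 1 : ℝ) * (1 - x) ^ n)) x := by
    intro x _
    have h := (((hasDerivAt_id x).const_sub 1).fun_pow (n + 1))
    simpa using h
  have hv : ∀ x ∈ Set.uIcc (0:ℝ) 1,
      HasDerivAt (fun x : ℝ => x ^ (m + 1) / (m + 1)) (x ^ m) x := by
    intro x _
    have h := (hasDerivAt_pow (m + 1) x).div_const (m + 1)
    have hm : ((m : ℝ) + 1) ≠ 0 := by positivity
    simpa [mul_div_assoc, mul_div_cancel_left₀, hm] using h
  have hI : ∫ x in (0:ℝ)..1, (1 - x) ^ (n + 1) * x ^ m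
      = (1 - 1) ^ (n + 1) * (1 ^ (m + 1) / (m + 1))
        - (1 - 0) ^ (n + 1) * (0 ^ (m + 1) / (m + 1))
        - ∫ x in (0:ℝ)..1, (-((n + 1 : ℝ) * (1 - x) ^ n)) * (x ^ (m + 1) / (m + 1)) := by
    exact integral_mul_deriv_eq_deriv_mul hu hv
      (by apply Continuous.intervalIntegrable; continuity)
      (by apply Continuous.intervalIntegrable; continuity)
  have h1 : ∫ x in (0:ℝ)..1, x ^ m * (1 - x) ^ (n + 1)
      = ∫ x in (0:ℝ)..1, (1 - x) ^ (n + 1) * x ^ m := by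
    simp_rw [mul_comm]
  rw [h1, hI]
  simp only [sub_self, zero_pow (Nat.succ_ne_zero n), zero_mul, zero_sub, zero_pow (Nat.succ_ne_zero m)]
  rw [show (∫ x in (0:ℝ)..1, (-((n + 1 : ℝ) * (1 - x) ^ n)) * (x ^ (m + 1) / (m + 1)))
      = -(((n + 1 : ℝ) / (m + 1)) * ∫ x in (0:ℝ)..1, x ^ (m + 1) * (1 - x) ^ n) from ?_]
  · ring
  · rw [← intervalIntegral.integral_const_mul, ← intervalIntegral.integral_neg]
    congr 1; funext x; ring

lemma beta_nat (n : ℕ) : ∀ m : ℕ, ∫ x in (0:ℝ)..1, x ^ m * (1 - x) ^ n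
    = (m.factorial * n.factorial : ℝ) / (m + n + 1).factorial := by
  induction n with
  | zero =>
    intro m
    simp only [pow_zero, mul_one, integral_pow, one_pow, Nat.add_zero, Nat.factorial_zero,
      Nat.cast_one, one_mul]
    rw [zero_pow (Nat.succ_ne_zero m), sub_zero, Nat.factorial_succ]
    push_cast
    rw [div_eq_div_iff (by positivity) (by positivity)]
    ring
  | succ n ih =>
    intro m
    rw [beta_step, ih (m + 1)]
    have h1 : (m + 1 + n + 1) = m + (n + 1) + 1 := by omega
    rw [h1]
    rw [Nat.factorial_succ (m), Nat.factorial_succ n]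
    push_cast
    have hm : ((m : ℝ) + 1) ≠ 0 := by positivity
    have hf : ((m + (n+1) + 1).factorial : ℝ) ≠ 0 := by positivity
    field_simp

/-- For all integers `N ≥ 2` and `k ≥ 0`, the alternating binomial sum
`∑_{s=0}^{N} (-1)^s C(N,s) (s+k)!/(N+s+k-1)!` equals `k!(2N-2)!/((N-2)!(2N+k-1)!)`. -/
theorem alternating_binomial_factorial_sum (N k : ℕ) (hN : 2 ≤ N) :
    ∑ s ∈ Finset.range (N + 1),
      (-1 : ℝ) ^ s * (N.choose s) * (s + k).factorial / (N + s + k - 1).factorial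
    = (k.factorial * (2 * N - 2).factorial : ℝ) /
        ((N - 2).factorial * (2 * N + k - 1).factorial) := by
  have hne : ((N - 2).factorial : ℝ) ≠ 0 := by positivity
  calc
    ∑ s ∈ Finset.range (N + 1),
        (-1 : ℝ) ^ s * (N.choose s) * (s + k).factorial / (N + s + k - 1).factorial
      = ∑ s ∈ Finset.range (N + 1), ∫ x in (0:ℝ)..1,
          ((-1 : ℝ) ^ s * (N.choose s) / (N - 2).factorial) * (x ^ (s + k) * (1 - x) ^ (N - 2)) := by
        refine Finset.sum_congr rfl fun s _ => ?_
        rw [intervalIntegral.integral_const_mul, beta_nat (N - 2) (s + k),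
          show s + k + (N - 2) + 1 = N + s + k - 1 by omega]
        have hf : ((N + s + k - 1).factorial : ℝ) ≠ 0 := by positivity
        field_simp
    _ = ∫ x in (0:ℝ)..1, ∑ s ∈ Finset.range (N + 1),
          ((-1 : ℝ) ^ s * (N.choose s) / (N - 2).factorial) * (x ^ (s + k) * (1 - x) ^ (N - 2)) :=
        (intervalIntegral.integral_finset_sum (fun s _ => by
          apply Continuous.intervalIntegrable; continuity)).symm
    _ = ∫ x in (0:ℝ)..1, (x ^ k * (1 - x) ^ (2 * N - 2)) / (N - 2).factorial := by
        congr 1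
        funext x
        calc
          ∑ s ∈ Finset.range (N + 1),
              ((-1 : ℝ) ^ s * (N.choose s) / (N - 2).factorial) * (x ^ (s + k) * (1 - x) ^ (N - 2))
            = ((1 - x) ^ (N - 2) * x ^ k / (N - 2).factorial) *
                ∑ s ∈ Finset.range (N + 1), (-x) ^ s * 1 ^ (N - s) * (N.choose s : ℝ) := by
              rw [Finset.mul_sum]
              refine Finset.sum_congr rfl fun s _ => ?_
              rw [pow_add]
              ring
          _ = ((1 - x) ^ (N - 2) * x ^ k / (N - 2).factorial) * (-x + 1) ^ N := by
              rw [add_pow]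
          _ = (x ^ k * (1 - x) ^ (2 * N - 2)) / (N - 2).factorial := by
              rw [show (-x + 1 : ℝ) = 1 - x by ring, div_mul_eq_mul_div, mul_right_comm,
                ← pow_add, show N - 2 + N = 2 * N - 2 by omega]
              ring_nf
    _ = (∫ x in (0:ℝ)..1, x ^ k * (1 - x) ^ (2 * N - 2)) / (N - 2).factorial :=
        intervalIntegral.integral_div _ _
    _ = (k.factorial * (2 * N - 2).factorial : ℝ) /
          ((N - 2).factorial * (2 * N + k - 1).factorial) := by
        rw [beta_nat (2 * N - 2) k, show k + (2 * N - 2) + 1 = 2 * N + k - 1 by omega]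
        rw [div_div]
        ring_nf
end

section
/- For integers N ≥ n+1 and z, w ∈ B^n, the integral ∫_{B^n} (1-|τ|²)^{N-n-1} ( (τ_j - z_j)/(1 - z·\overline{τ}) + (w_j - τ_j)/(1 - w·\overline{τ}) )^N dV(τ) equals (w_j - z_j)^N ∫_{B^n} (1-|τ|²)^{N-n-1} (1-|τ_j|²)^N dV(τ), where dV is Lebesgue measure on B^n ⊂ C^n. -/
open Finset MeasureTheory

namespace BCRI

open Complex Metric

variable {n : ℕ}

/-- open unit ball -/
def S (n : ℕ) : Set (Fin n → ℂ) := {τ | ∑ k, ‖τ k‖ ^ 2 < 1}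
/-- closed unit ball -/
def K (n : ℕ) : Set (Fin n → ℂ) := {τ | ∑ k, ‖τ k‖ ^ 2 ≤ 1}

lemma continuous_sumSq : Continuous fun τ : Fin n → ℂ => ∑ k, ‖τ k‖ ^ 2 := by
  exact continuous_finset_sum _ fun k _ => ((continuous_apply k).norm.pow 2)

lemma S_subset_K : S n ⊆ K n := fun τ h => le_of_lt (a := ∑ k, ‖τ k‖ ^ 2) h

lemma measurableSet_S : MeasurableSet (S n) :=
  (isOpen_lt continuous_sumSq continuous_const).measurableSet

lemma isCompact_K : IsCompact (K n) := by
  refine Metric.isCompact_of_isClosed_isBounded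
    (isClosed_le continuous_sumSq continuous_const) ?_
  refine (Metric.isBounded_closedBall (x := (0 : Fin n → ℂ)) (r := 1)).subset ?_
  intro τ hτ
  simp only [Metric.mem_closedBall, dist_zero_right]
  refine (pi_norm_le_iff_of_nonneg zero_le_one).2 fun k => ?_
  have h1 : ‖τ k‖ ^ 2 ≤ 1 := by
    refine le_trans ?_ hτ
    exact Finset.single_le_sum (f := fun k => ‖τ k‖ ^ 2) (fun _ _ => sq_nonneg _) (mem_univ k)
  nlinarith [norm_nonneg (τ k)]

lemma measure_S_lt_top : volume (S n) < ⊤ :=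
  lt_of_le_of_lt (measure_mono S_subset_K) isCompact_K.measure_lt_top

lemma integrableOnS {f : (Fin n → ℂ) → ℂ} (hf : ContinuousOn f (K n)) :
    IntegrableOn f (S n) :=
  (hf.integrableOn_compact isCompact_K).mono_set S_subset_K


/-! ### Rotations -/

/-- rotate the coordinates in the mask `m` by angle `θ` -/
noncomputable def rot (m : Fin n → Bool) (θ : ℝ) (τ : Fin n → ℂ) : Fin n → ℂ :=
  fun k => if m k then Complex.exp (θ * I) * τ k else τ k

lemma continuous_rot (m : Fin n → Bool) :
    Continuous fun p : ℝ × (Fin n → ℂ) => rot m p.1 p.2 := by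
  refine continuous_pi fun k => ?_
  by_cases hk : m k <;> simp only [rot, hk, if_true, if_false]
  · exact ((Complex.continuous_exp.comp ((Complex.continuous_ofReal.comp continuous_fst).mul
      continuous_const))).mul ((continuous_apply k).comp continuous_snd)
  · exact (continuous_apply k).comp continuous_snd

lemma continuous_rot' (m : Fin n → Bool) (θ : ℝ) : Continuous (rot m θ) := by
  refine continuous_pi fun k => ?_
  by_cases hk : m k <;> simp only [rot, hk, if_true, if_false]
  · exact continuous_const.mul (continuous_apply k)
  · exact continuous_apply k

lemma norm_exp_mul_I (θ : ℝ) : ‖Complex.exp (θ * I)‖ = 1 := by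
  rw [Complex.norm_exp_ofReal_mul_I]

lemma norm_rot (m : Fin n → Bool) (θ : ℝ) (τ : Fin n → ℂ) (k : Fin n) :
    ‖rot m θ τ k‖ = ‖τ k‖ := by
  by_cases hk : m k <;> simp only [rot, hk, if_true, if_false, Bool.false_eq_true]
  rw [norm_mul, norm_exp_mul_I, one_mul]

lemma sumSq_rot (m : Fin n → Bool) (θ : ℝ) (τ : Fin n → ℂ) :
    ∑ k, ‖rot m θ τ k‖ ^ 2 = ∑ k, ‖τ k‖ ^ 2 :=
  Finset.sum_congr rfl fun k _ => by rw [norm_rot]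

lemma rot_mem_K {m : Fin n → Bool} {θ : ℝ} {τ : Fin n → ℂ} (h : τ ∈ K n) :
    rot m θ τ ∈ K n := by
  simpa only [K, Set.mem_setOf_eq, sumSq_rot] using h

lemma rot_rot (m : Fin n → Bool) (θ θ' : ℝ) (τ : Fin n → ℂ) :
    rot m θ (rot m θ' τ) = rot m (θ + θ') τ := by
  funext k
  by_cases hk : m k <;> simp only [rot, hk, if_true, if_false, Bool.false_eq_true]
  rw [← mul_assoc, ← Complex.exp_add]
  push_cast
  ring_nf

lemma rot_zero (m : Fin n → Bool) (τ : Fin n → ℂ) : rot m 0 τ = τ := by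
  funext k
  by_cases hk : m k <;> simp [rot, hk]

/-- rotation as a measurable equivalence -/
noncomputable def rotE (m : Fin n → Bool) (θ : ℝ) : (Fin n → ℂ) ≃ᵐ (Fin n → ℂ) where
  toFun := rot m θ
  invFun := rot m (-θ)
  left_inv := fun τ => by rw [rot_rot, neg_add_cancel, rot_zero]
  right_inv := fun τ => by rw [rot_rot, add_neg_cancel, rot_zero]
  measurable_toFun := (continuous_rot' m θ).measurable
  measurable_invFun := (continuous_rot' m (-θ)).measurable

lemma measurePreserving_mul_exp (θ : ℝ) :
    MeasurePreserving (fun x : ℂ => Complex.exp (θ * I) * x) volume volume := by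
  have h := LinearIsometryEquiv.measurePreserving (rotation (Circle.exp θ))
  have e : ⇑(rotation (Circle.exp θ)) = fun x : ℂ => Complex.exp (θ * I) * x := by
    funext x
    rw [rotation_apply, Circle.coe_exp]
  rwa [e] at h

lemma measurePreserving_rot (m : Fin n → Bool) (θ : ℝ) :
    MeasurePreserving (rot m θ) volume volume := by
  have h := MeasureTheory.volume_preserving_pi
    (f := fun k : Fin n => fun x : ℂ => if m k then Complex.exp (θ * I) * x else x)
    (fun k => by
      by_cases hk : m k
      · simpa only [hk, if_true] using measurePreserving_mul_exp θ
      · simp only [hk, if_false, Bool.false_eq_true]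
        exact MeasurePreserving.id (volume : Measure ℂ))
  have e : (fun (a : Fin n → ℂ) (k : Fin n) =>
      if m k then Complex.exp (θ * I) * a k else a k) = rot m θ := by
    funext τ k
    rfl
  rwa [e] at h

lemma preimage_rot_S (m : Fin n → Bool) (θ : ℝ) : rot m θ ⁻¹' S n = S n := by
  ext τ
  simp only [Set.mem_preimage, S, Set.mem_setOf_eq, sumSq_rot]


/-! ### Mean value property -/

lemma circle_mean_value (H : ℂ → ℂ) (h : DifferentiableOn ℂ H (closedBall 0 1)) :
    ∫ θ in (0:ℝ)..(2 * Real.pi), H (Complex.exp (θ * I)) = (2 * Real.pi : ℝ) * H 0 := by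
  have hd : DiffContOnCl ℂ H (ball (0:ℂ) 1) :=
    ⟨h.mono ball_subset_closedBall, h.continuousOn.mono closure_ball_subset_closedBall⟩
  have key := hd.circleIntegral_sub_inv_smul (w := 0) (by simp)
  rw [circleIntegral] at key
  simp only [deriv_circleMap, circleMap, ofReal_one, one_mul, zero_add, sub_zero,
    smul_eq_mul] at key
  have e : ∀ θ : ℝ, Complex.exp (θ * I) * I * ((Complex.exp (θ * I))⁻¹ * H (Complex.exp (θ * I)))
      = I * H (Complex.exp (θ * I)) := by
    intro θ
    have hne : Complex.exp (θ * I) ≠ 0 := Complex.exp_ne_zero _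
    field_simp
  rw [intervalIntegral.integral_congr (fun θ _ => e θ)] at key
  rw [intervalIntegral.integral_const_mul] at key
  have : I * (∫ θ in (0:ℝ)..(2 * Real.pi), H (Complex.exp (θ * I)))
      = I * ((2 * Real.pi : ℝ) * H 0) := by
    rw [key]; push_cast; ring
  exact mul_left_cancel₀ Complex.I_ne_zero this

lemma circle_mean_value_neg (H : ℂ → ℂ) (h : DifferentiableOn ℂ H (closedBall 0 1)) :
    ∫ θ in (0:ℝ)..(2 * Real.pi), H (Complex.exp (-(θ * I)))
      = (2 * Real.pi : ℝ) * H 0 := by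
  have e : ∀ θ : ℝ, H (Complex.exp (-((2 * Real.pi - θ : ℝ) * I))) = H (Complex.exp (θ * I)) := by
    intro θ
    congr 1
    have : -((2 * Real.pi - θ : ℝ) * I) = θ * I - 2 * Real.pi * I := by push_cast; ring
    rw [this, Complex.exp_sub, Complex.exp_two_pi_mul_I, div_one]
  have hsub := intervalIntegral.integral_comp_sub_left
    (a := (0:ℝ)) (b := 2 * Real.pi) (fun θ : ℝ => H (Complex.exp (-(θ * I)))) (2 * Real.pi)
  simp only [sub_zero, sub_self] at hsub
  calc ∫ θ in (0:ℝ)..(2 * Real.pi), H (Complex.exp (-(θ * I)))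
      = ∫ θ in (0:ℝ)..(2 * Real.pi), H (Complex.exp (-((2 * Real.pi - θ : ℝ) * I))) := by
        rw [hsub]
    _ = ∫ θ in (0:ℝ)..(2 * Real.pi), H (Complex.exp (θ * I)) :=
        intervalIntegral.integral_congr (fun θ _ => e θ)
    _ = (2 * Real.pi : ℝ) * H 0 := circle_mean_value H h


/-! ### Averaging over rotations -/

lemma avg_rot (m : Fin n → Bool) (f g : (Fin n → ℂ) → ℂ)
    (hf : ContinuousOn f (K n))
    (havg : ∀ τ ∈ S n,
      (∫ θ in (0:ℝ)..(2 * Real.pi), f (rot m θ τ)) = ((2 * Real.pi : ℝ) : ℂ) * g τ) :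
    ∫ τ in S n, f τ = ∫ τ in S n, g τ := by
  have hπ : (0:ℝ) < 2 * Real.pi := by positivity
  obtain ⟨C, hC⟩ := isCompact_K.exists_bound_of_continuousOn hf
  haveI : IsFiniteMeasure (volume.restrict (S n)) :=
    ⟨by rw [Measure.restrict_apply_univ]; exact measure_S_lt_top⟩
  haveI : IsFiniteMeasure (volume.restrict (Set.Ioc (0:ℝ) (2 * Real.pi))) :=
    ⟨by rw [Measure.restrict_apply_univ]; exact measure_Ioc_lt_top⟩
  set μ := (volume.restrict (Set.Ioc (0:ℝ) (2 * Real.pi))).prod (volume.restrict (S n)) with hμ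
  have hrect : MeasurableSet (Set.Ioc (0:ℝ) (2 * Real.pi) ×ˢ S n) :=
    measurableSet_Ioc.prod measurableSet_S
  have hFc : ContinuousOn (fun p : ℝ × (Fin n → ℂ) => f (rot m p.1 p.2))
      (Set.Ioc (0:ℝ) (2 * Real.pi) ×ˢ S n) := by
    refine (hf.comp (continuous_rot m).continuousOn ?_)
    rintro ⟨θ, τ⟩ ⟨-, hτ⟩
    exact rot_mem_K (S_subset_K hτ)
  have hFint : Integrable (Function.uncurry fun θ τ => f (rot m θ τ)) μ := by
    constructor
    · rw [hμ, Measure.prod_restrict]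
      exact hFc.aestronglyMeasurable hrect
    · refine HasFiniteIntegral.of_bounded (C := C) ?_
      rw [hμ, Measure.prod_restrict]
      refine ae_restrict_of_forall_mem hrect ?_
      rintro ⟨θ, τ⟩ ⟨-, hτ⟩
      exact hC _ (rot_mem_K (S_subset_K hτ))
  have swap := MeasureTheory.integral_integral_swap hFint
  have hinv : ∀ θ : ℝ, (∫ τ in S n, f (rot m θ τ)) = ∫ τ in S n, f τ := by
    intro θ
    have h := (measurePreserving_rot m θ).setIntegral_preimage_emb
      (rotE m θ).measurableEmbedding f (S n)
    rwa [preimage_rot_S] at h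
  have step1 : (∫ θ in Set.Ioc (0:ℝ) (2 * Real.pi), (∫ τ in S n, f (rot m θ τ)))
      = ((2 * Real.pi : ℝ) : ℂ) * ∫ τ in S n, f τ := by
    rw [setIntegral_congr_fun measurableSet_Ioc (fun θ _ => hinv θ)]
    rw [setIntegral_const]
    rw [measureReal_def, Real.volume_Ioc, sub_zero, ENNReal.toReal_ofReal hπ.le]
    rw [Complex.real_smul]
  have step2 : (∫ τ in S n, (∫ θ in Set.Ioc (0:ℝ) (2 * Real.pi), f (rot m θ τ)))
      = ((2 * Real.pi : ℝ) : ℂ) * ∫ τ in S n, g τ := by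
    have he : ∀ τ ∈ S n, (∫ θ in Set.Ioc (0:ℝ) (2 * Real.pi), f (rot m θ τ))
        = ((2 * Real.pi : ℝ) : ℂ) * g τ := by
      intro τ hτ
      rw [← intervalIntegral.integral_of_le hπ.le]
      exact havg τ hτ
    rw [setIntegral_congr_fun measurableSet_S he]
    exact MeasureTheory.integral_const_mul _ _
  have hne : ((2 * Real.pi : ℝ) : ℂ) ≠ 0 := by
    exact_mod_cast Complex.ofReal_ne_zero.mpr hπ.ne'
  apply mul_left_cancel₀ hne
  rw [← step1, ← step2, ← swap]


/-! ### Cauchy-Schwarz -/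

lemma cs_lt {z τ : Fin n → ℂ} (hz : ∑ k, ‖z k‖ ^ 2 < 1) (hτ : τ ∈ K n) :
    ‖∑ k, z k * (starRingEnd ℂ) (τ k)‖ < 1 := by
  have hτ' : ∑ k, ‖τ k‖ ^ 2 ≤ 1 := hτ
  have h1 : ‖∑ k, z k * (starRingEnd ℂ) (τ k)‖ ≤ ∑ k, ‖z k‖ * ‖τ k‖ := by
    refine (norm_sum_le _ _).trans (Finset.sum_le_sum fun k _ => ?_)
    rw [norm_mul, RCLike.norm_conj]
  have h2 := Finset.sum_mul_sq_le_sq_mul_sq Finset.univ (fun k => ‖z k‖) (fun k => ‖τ k‖)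
  have h3 : (0:ℝ) ≤ ∑ k, ‖z k‖ * ‖τ k‖ :=
    Finset.sum_nonneg fun k _ => mul_nonneg (norm_nonneg _) (norm_nonneg _)
  have h4 : (0:ℝ) ≤ ∑ k, ‖z k‖ ^ 2 := Finset.sum_nonneg fun k _ => sq_nonneg _
  nlinarith


/-! ### The weight -/

/-- the weight function -/
noncomputable def Wc (M : ℕ) (τ : Fin n → ℂ) : ℂ := (((1 - ∑ k, ‖τ k‖ ^ 2 : ℝ) ^ M : ℝ) : ℂ)

lemma continuous_Wc (M : ℕ) : Continuous (Wc (n := n) M) :=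
  Complex.continuous_ofReal.comp ((continuous_const.sub continuous_sumSq).pow M)

lemma Wc_rot (M : ℕ) (m : Fin n → Bool) (θ : ℝ) (τ : Fin n → ℂ) :
    Wc M (rot m θ τ) = Wc M τ := by
  unfold Wc
  rw [sumSq_rot]

/-! ### Algebra and differentiability helpers -/

lemma one_sub_ne {v s : ℂ} (hv : ‖v‖ ≤ 1) (hs : ‖s‖ < 1) : 1 - v * s ≠ 0 := by
  intro h
  have : v * s = 1 := by linear_combination -h
  have h2 : ‖v * s‖ < 1 := by
    rw [norm_mul]
    calc ‖v‖ * ‖s‖ ≤ 1 * ‖s‖ := by gcongr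
    _ = ‖s‖ := one_mul _
    _ < 1 := hs
  rw [this, norm_one] at h2
  exact lt_irrefl _ h2

lemma frac_algebra (e v zj wj tj s t : ℂ) (hev : e * v = 1) (hvs : 1 - v * s ≠ 0)
    (hvt : 1 - v * t ≠ 0) :
    (e * tj - zj) / (1 - v * s) + (wj - e * tj) / (1 - v * t)
      = ((wj - zj) + tj * (s - t) + v * (zj * t - wj * s)) / ((1 - v * s) * (1 - v * t)) := by
  have hv : v ≠ 0 := by
    intro h
    rw [h, mul_zero] at hev
    exact one_ne_zero hev.symm
  have he : e = v⁻¹ := by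
    field_simp
    linear_combination hev
  subst he
  field_simp
  ring

lemma diffOn_HH (c P A s t : ℂ) (hs : ‖s‖ < 1) (ht : ‖t‖ < 1) (N : ℕ) :
    DifferentiableOn ℂ
      (fun v => c * (((P + v * A) / ((1 - v * s) * (1 - v * t))) ^ N))
      (closedBall 0 1) := by
  have hnum : DifferentiableOn ℂ (fun v : ℂ => P + v * A) (closedBall 0 1) :=
    (differentiable_const P).differentiableOn.add
      ((differentiable_id.mul_const A).differentiableOn)
  have hd1 : DifferentiableOn ℂ (fun v : ℂ => 1 - v * s) (closedBall 0 1) :=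
    (differentiable_const 1).differentiableOn.sub
      ((differentiable_id.mul_const s).differentiableOn)
  have hd2 : DifferentiableOn ℂ (fun v : ℂ => 1 - v * t) (closedBall 0 1) :=
    (differentiable_const 1).differentiableOn.sub
      ((differentiable_id.mul_const t).differentiableOn)
  have hden : ∀ v ∈ closedBall (0:ℂ) 1, (1 - v * s) * (1 - v * t) ≠ 0 := by
    intro v hv
    rw [mem_closedBall, dist_zero_right] at hv
    exact mul_ne_zero (one_sub_ne hv hs) (one_sub_ne hv ht)
  exact ((hnum.div (hd1.mul hd2) hden).pow N).const_mul c


lemma one_sub_ne' {s : ℂ} (hs : ‖s‖ < 1) : 1 - s ≠ 0 := by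
  have := one_sub_ne (v := 1) (by simp) hs
  simpa using this

lemma conj_exp_mul (θ : ℝ) (x : ℂ) :
    (starRingEnd ℂ) (Complex.exp (θ * I) * x)
      = Complex.exp (-(θ * I)) * (starRingEnd ℂ) x := by
  rw [map_mul]
  congr 1
  rw [← Complex.exp_conj]
  congr 1
  simp [Complex.conj_ofReal]

lemma norm_exp_neg_mul_I (θ : ℝ) : ‖Complex.exp (-(↑θ * I))‖ = 1 := by
  have : -((θ:ℂ) * I) = ((-θ : ℝ) : ℂ) * I := by push_cast; ring
  rw [this, norm_exp_mul_I]

lemma rot_true_apply (θ : ℝ) (τ : Fin n → ℂ) (k : Fin n) :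
    rot (fun _ => true) θ τ k = Complex.exp (θ * I) * τ k := by
  simp [rot]

lemma sum_conj_rot_true (θ : ℝ) (τ : Fin n → ℂ) (z : Fin n → ℂ) :
    ∑ k, z k * (starRingEnd ℂ) (rot (fun _ => true) θ τ k)
      = Complex.exp (-(θ * I)) * ∑ k, z k * (starRingEnd ℂ) (τ k) := by
  rw [Finset.mul_sum]
  refine Finset.sum_congr rfl fun k _ => ?_
  rw [rot_true_apply, conj_exp_mul]
  ring

section Main

variable (M N : ℕ) (j : Fin n) (z w : Fin n → ℂ)

lemma continuousOn_B (hz : ∑ k, ‖z k‖ ^ 2 < 1) (hw : ∑ k, ‖w k‖ ^ 2 < 1) :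
    ContinuousOn (fun τ : Fin n → ℂ =>
      Wc M τ * ((τ j - z j) / (1 - ∑ k, z k * (starRingEnd ℂ) (τ k)) +
          (w j - τ j) / (1 - ∑ k, w k * (starRingEnd ℂ) (τ k))) ^ N) (K n) := by
  have hconj : Continuous fun x : ℂ => (starRingEnd ℂ) x := continuous_star
  have hsum : ∀ u : Fin n → ℂ, Continuous fun τ : Fin n → ℂ =>
      1 - ∑ k, u k * (starRingEnd ℂ) (τ k) := fun u =>
    continuous_const.sub (continuous_finset_sum _ fun k _ =>
      continuous_const.mul (hconj.comp (continuous_apply k)))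
  refine ((continuous_Wc M).continuousOn.mul (ContinuousOn.pow ?_ N))
  refine ContinuousOn.add
    (ContinuousOn.div (((continuous_apply j).sub continuous_const).continuousOn)
      (hsum z).continuousOn fun τ hτ => one_sub_ne' (cs_lt hz hτ))
    (ContinuousOn.div ((continuous_const.sub (continuous_apply j)).continuousOn)
      (hsum w).continuousOn fun τ hτ => one_sub_ne' (cs_lt hw hτ))

lemma step1 (hz : ∑ k, ‖z k‖ ^ 2 < 1) (hw : ∑ k, ‖w k‖ ^ 2 < 1) :
    (∫ τ in S n, Wc M τ *
        ((τ j - z j) / (1 - ∑ k, z k * (starRingEnd ℂ) (τ k)) +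
          (w j - τ j) / (1 - ∑ k, w k * (starRingEnd ℂ) (τ k))) ^ N)
    = ∫ τ in S n, Wc M τ *
        ((w j - z j) + τ j * ((∑ k, z k * (starRingEnd ℂ) (τ k))
          - ∑ k, w k * (starRingEnd ℂ) (τ k))) ^ N := by
  refine avg_rot (fun _ => true) _ _ (continuousOn_B M N j z w hz hw) ?_
  intro τ hτ
  set s := ∑ k, z k * (starRingEnd ℂ) (τ k) with hs
  set t := ∑ k, w k * (starRingEnd ℂ) (τ k) with ht
  have hsK : ‖s‖ < 1 := cs_lt hz (S_subset_K hτ)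
  have htK : ‖t‖ < 1 := cs_lt hw (S_subset_K hτ)
  set P := (w j - z j) + τ j * (s - t) with hP
  set A := z j * t - w j * s with hA
  have hmv := circle_mean_value_neg
    (fun v => Wc M τ * (((P + v * A) / ((1 - v * s) * (1 - v * t))) ^ N))
    (diffOn_HH (Wc M τ) P A s t hsK htK N)
  have hpt : ∀ θ : ℝ,
      Wc M (rot (fun _ => true) θ τ) *
        ((rot (fun _ => true) θ τ j - z j) /
            (1 - ∑ k, z k * (starRingEnd ℂ) (rot (fun _ => true) θ τ k)) +
          (w j - rot (fun _ => true) θ τ j) /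
            (1 - ∑ k, w k * (starRingEnd ℂ) (rot (fun _ => true) θ τ k))) ^ N
      = Wc M τ * (((P + Complex.exp (-(θ * I)) * A) /
          ((1 - Complex.exp (-(θ * I)) * s) * (1 - Complex.exp (-(θ * I)) * t))) ^ N) := by
    intro θ
    rw [Wc_rot, rot_true_apply, sum_conj_rot_true, sum_conj_rot_true, ← hs, ← ht]
    congr 2
    have hev : Complex.exp (θ * I) * Complex.exp (-(θ * I)) = 1 := by
      rw [← Complex.exp_add, add_neg_cancel, Complex.exp_zero]
    have hvs : 1 - Complex.exp (-(θ * I)) * s ≠ 0 :=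
      one_sub_ne (le_of_eq (norm_exp_neg_mul_I θ)) hsK
    have hvt : 1 - Complex.exp (-(θ * I)) * t ≠ 0 :=
      one_sub_ne (le_of_eq (norm_exp_neg_mul_I θ)) htK
    exact frac_algebra _ _ _ _ _ _ _ hev hvs hvt
  rw [intervalIntegral.integral_congr (fun θ _ => hpt θ), hmv]
  simp only [zero_mul, sub_zero, mul_one, add_zero, div_one, one_mul]

end Main


/-! ### Orthogonality -/

lemma rot_mask_apply (θ : ℝ) (τ : Fin n → ℂ) (l k : Fin n) :
    rot (fun k => k == l) θ τ k = if k = l then Complex.exp (θ * I) * τ k else τ k := by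
  simp [rot]

lemma mul_conj_self (x : ℂ) : x * (starRingEnd ℂ) x = ((‖x‖ ^ 2 : ℝ) : ℂ) := by
  rw [Complex.mul_conj, Complex.normSq_eq_norm_sq]

lemma sum_conj_rot_mask (θ : ℝ) (τ d : Fin n → ℂ) (l : Fin n) :
    ∑ k, d k * (starRingEnd ℂ) (rot (fun k => k == l) θ τ k)
      = (∑ k, Function.update d l 0 k * (starRingEnd ℂ) (τ k))
        + Complex.exp (-(θ * I)) * (d l * (starRingEnd ℂ) (τ l)) := by
  have e : ∀ k, d k * (starRingEnd ℂ) (rot (fun k => k == l) θ τ k)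
      = (Function.update d l 0 k * (starRingEnd ℂ) (τ k))
        + (if k = l then Complex.exp (-(θ * I)) * (d l * (starRingEnd ℂ) (τ l)) else 0) := by
    intro k
    by_cases hk : k = l
    · subst hk
      rw [rot_mask_apply, if_pos rfl, if_pos rfl, Function.update_self, conj_exp_mul]
      ring
    · rw [rot_mask_apply, if_neg hk, if_neg hk, Function.update_of_ne hk]
      ring
  rw [Finset.sum_congr rfl (fun k _ => e k), Finset.sum_add_distrib,
    Finset.sum_ite_eq' Finset.univ l
      (fun _ => Complex.exp (-(θ * I)) * (d l * (starRingEnd ℂ) (τ l)))]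
  simp

/-- the orthogonality integral -/
noncomputable def J (M m : ℕ) (j : Fin n) (d : Fin n → ℂ) : ℂ :=
  ∫ τ in S n, Wc M τ * τ j ^ m * (∑ l, d l * (starRingEnd ℂ) (τ l)) ^ m

lemma continuousOn_J (M m : ℕ) (j : Fin n) (d : Fin n → ℂ) :
    ContinuousOn (fun τ : Fin n → ℂ =>
      Wc M τ * τ j ^ m * (∑ l, d l * (starRingEnd ℂ) (τ l)) ^ m) (K n) := by
  have hconj : Continuous fun x : ℂ => (starRingEnd ℂ) x := continuous_star
  exact (((continuous_Wc M).mul ((continuous_apply j).pow m)).mul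
    ((continuous_finset_sum _ fun k _ =>
      continuous_const.mul (hconj.comp (continuous_apply k))).pow m)).continuousOn

lemma kill_one (M m : ℕ) (j l : Fin n) (hl : l ≠ j) (d : Fin n → ℂ) :
    J M m j d = J M m j (Function.update d l 0) := by
  refine avg_rot (fun k => k == l) _ _ (continuousOn_J M m j d) ?_
  intro τ hτ
  set A := ∑ k, Function.update d l 0 k * (starRingEnd ℂ) (τ k) with hA
  set Bq := d l * (starRingEnd ℂ) (τ l) with hBq
  have hdiff : DifferentiableOn ℂ
      (fun v => Wc M τ * τ j ^ m * (A + v * Bq) ^ m) (closedBall 0 1) :=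
    ((((differentiable_const A).add (differentiable_id.mul_const Bq)).pow m).const_mul
      (Wc M τ * τ j ^ m)).differentiableOn
  have hmv := circle_mean_value_neg (fun v => Wc M τ * τ j ^ m * (A + v * Bq) ^ m) hdiff
  have hpt : ∀ θ : ℝ,
      Wc M (rot (fun k => k == l) θ τ) * rot (fun k => k == l) θ τ j ^ m *
        (∑ k, d k * (starRingEnd ℂ) (rot (fun k => k == l) θ τ k)) ^ m
      = Wc M τ * τ j ^ m * (A + Complex.exp (-(θ * I)) * Bq) ^ m := by
    intro θ
    rw [Wc_rot, rot_mask_apply, if_neg (Ne.symm hl), sum_conj_rot_mask, ← hA, ← hBq]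
  rw [intervalIntegral.integral_congr (fun θ _ => hpt θ), hmv]
  simp only [zero_mul, add_zero]

lemma kill_finset (M m : ℕ) (j : Fin n) :
    ∀ t : Finset (Fin n), j ∉ t → ∀ d : Fin n → ℂ,
      J M m j d = J M m j (fun k => if k ∈ t then 0 else d k) := by
  intro t
  induction t using Finset.induction_on with
  | empty =>
    intro _ d
    congr 1
  | @insert a t ha ih =>
    intro hj d
    have haj : a ≠ j := fun h => hj (h ▸ Finset.mem_insert_self a t)
    have hjt : j ∉ t := fun h => hj (Finset.mem_insert_of_mem h)
    rw [kill_one M m j a haj d, ih hjt (Function.update d a 0)]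
    congr 1
    funext k
    by_cases hk : k = a
    · subst hk
      by_cases hkt : k ∈ t <;>
        simp [hkt, Function.update_self, Finset.mem_insert]
    · by_cases hkt : k ∈ t <;>
        simp [hkt, hk, Function.update_of_ne hk, Finset.mem_insert]

lemma orth (M m : ℕ) (j : Fin n) (d : Fin n → ℂ) :
    (∫ τ in S n, Wc M τ * τ j ^ m * (∑ l, d l * (starRingEnd ℂ) (τ l)) ^ m)
    = d j ^ m * ∫ τ in S n, Wc M τ * ((‖τ j‖ ^ 2 : ℝ) : ℂ) ^ m := by
  have h1 := kill_finset M m j (Finset.univ.erase j) (Finset.notMem_erase j _) d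
  have h2 : ∀ τ : Fin n → ℂ,
      (∑ k, (if k ∈ Finset.univ.erase j then 0 else d k) * (starRingEnd ℂ) (τ k))
        = d j * (starRingEnd ℂ) (τ j) := by
    intro τ
    rw [Fintype.sum_eq_single j]
    · simp
    · intro k hk
      simp [Finset.mem_erase, hk]
  have h3 : ∀ τ : Fin n → ℂ, Wc M τ * τ j ^ m * (d j * (starRingEnd ℂ) (τ j)) ^ m
      = d j ^ m * (Wc M τ * ((‖τ j‖ ^ 2 : ℝ) : ℂ) ^ m) := by
    intro τ
    rw [← mul_conj_self (τ j), mul_pow, mul_pow]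
    ring
  show J M m j d = _
  rw [h1]
  show (∫ τ in S n, Wc M τ * τ j ^ m *
      (∑ l, (if l ∈ Finset.univ.erase j then 0 else d l) * (starRingEnd ℂ) (τ l)) ^ m) = _
  rw [setIntegral_congr_fun measurableSet_S (fun τ _ => by rw [h2 τ, h3 τ])]
  exact MeasureTheory.integral_const_mul _ _


/-! ### Main assembly -/

lemma main_aux (M N : ℕ) (j : Fin n) (z w : Fin n → ℂ)
    (hz : ∑ k, ‖z k‖ ^ 2 < 1) (hw : ∑ k, ‖w k‖ ^ 2 < 1) :
    (∫ τ in S n, (((1 - ∑ k, ‖τ k‖ ^ 2 : ℝ) ^ M : ℝ) : ℂ) *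
        ((τ j - z j) / (1 - ∑ k, z k * (starRingEnd ℂ) (τ k)) +
          (w j - τ j) / (1 - ∑ k, w k * (starRingEnd ℂ) (τ k))) ^ N)
    = (w j - z j) ^ N *
        ∫ τ in S n,
          ((((1 - ∑ k, ‖τ k‖ ^ 2 : ℝ) ^ M) * (1 - ‖τ j‖ ^ 2) ^ N : ℝ) : ℂ) := by
  have hcQ : ∀ m : ℕ, Continuous fun τ : Fin n → ℂ => Wc M τ * ((‖τ j‖ ^ 2 : ℝ) : ℂ) ^ m :=
    fun m => (continuous_Wc M).mul
      ((Complex.continuous_ofReal.comp ((continuous_apply j).norm.pow 2)).pow m)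
  set Q : ℕ → ℂ := fun m => ∫ τ in S n, Wc M τ * ((‖τ j‖ ^ 2 : ℝ) : ℂ) ^ m with hQ
  set D : (Fin n → ℂ) → ℂ := fun τ => ∑ l, (z l - w l) * (starRingEnd ℂ) (τ l) with hD
  -- Step 1: circle average in all variables simultaneously
  have h1 := step1 M N j z w hz hw
  -- rewrite the result of step 1 through the binomial theorem
  have e1 : ∀ τ : Fin n → ℂ,
      Wc M τ * ((w j - z j) + τ j * ((∑ k, z k * (starRingEnd ℂ) (τ k))
          - ∑ k, w k * (starRingEnd ℂ) (τ k))) ^ N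
      = ∑ m ∈ Finset.range (N + 1),
          (w j - z j) ^ (N - m) * (N.choose m : ℂ) * (Wc M τ * τ j ^ m * D τ ^ m) := by
    intro τ
    have hst : (∑ k, z k * (starRingEnd ℂ) (τ k)) - ∑ k, w k * (starRingEnd ℂ) (τ k)
        = D τ := by
      rw [hD, ← Finset.sum_sub_distrib]
      exact Finset.sum_congr rfl fun l _ => by ring
    rw [hst, add_comm, add_pow, Finset.mul_sum]
    exact Finset.sum_congr rfl fun m _ => by rw [mul_pow]; ring
  have hint1 : ∀ m ∈ Finset.range (N + 1), IntegrableOn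
      (fun τ : Fin n → ℂ =>
        (w j - z j) ^ (N - m) * (N.choose m : ℂ) * (Wc M τ * τ j ^ m * D τ ^ m))
      (S n) := by
    intro m _
    exact (integrableOnS (continuousOn_J M m j (fun l => z l - w l))).const_mul _
  have h2 : (∫ τ in S n, Wc M τ * ((w j - z j) + τ j * ((∑ k, z k * (starRingEnd ℂ) (τ k))
        - ∑ k, w k * (starRingEnd ℂ) (τ k))) ^ N)
      = ∑ m ∈ Finset.range (N + 1),
          (w j - z j) ^ (N - m) * (N.choose m : ℂ) * ((z j - w j) ^ m * Q m) := by
    rw [setIntegral_congr_fun measurableSet_S (fun τ _ => e1 τ),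
      MeasureTheory.integral_finset_sum _ hint1]
    refine Finset.sum_congr rfl fun m _ => ?_
    rw [MeasureTheory.integral_const_mul, orth M m j (fun l => z l - w l)]
  -- the right-hand side through the binomial theorem
  have e2 : ∀ τ : Fin n → ℂ,
      ((((1 - ∑ k, ‖τ k‖ ^ 2 : ℝ) ^ M) * (1 - ‖τ j‖ ^ 2) ^ N : ℝ) : ℂ)
      = ∑ m ∈ Finset.range (N + 1),
          (-1 : ℂ) ^ m * (N.choose m : ℂ) * (Wc M τ * ((‖τ j‖ ^ 2 : ℝ) : ℂ) ^ m) := by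
    intro τ
    have hco : ((((1 - ∑ k, ‖τ k‖ ^ 2 : ℝ) ^ M) * (1 - ‖τ j‖ ^ 2) ^ N : ℝ) : ℂ)
        = Wc M τ * (-((‖τ j‖ ^ 2 : ℝ) : ℂ) + 1) ^ N := by
      unfold Wc
      push_cast
      ring
    rw [hco, add_pow, Finset.mul_sum]
    refine Finset.sum_congr rfl fun m _ => ?_
    rw [neg_pow]
    ring
  have hint2 : ∀ m ∈ Finset.range (N + 1), IntegrableOn
      (fun τ : Fin n → ℂ =>
        (-1 : ℂ) ^ m * (N.choose m : ℂ) * (Wc M τ * ((‖τ j‖ ^ 2 : ℝ) : ℂ) ^ m))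
      (S n) := by
    intro m _
    exact (integrableOnS (hcQ m).continuousOn).const_mul _
  have h3 : (∫ τ in S n,
        ((((1 - ∑ k, ‖τ k‖ ^ 2 : ℝ) ^ M) * (1 - ‖τ j‖ ^ 2) ^ N : ℝ) : ℂ))
      = ∑ m ∈ Finset.range (N + 1), (-1 : ℂ) ^ m * (N.choose m : ℂ) * Q m := by
    rw [setIntegral_congr_fun measurableSet_S (fun τ _ => e2 τ),
      MeasureTheory.integral_finset_sum _ hint2]
    exact Finset.sum_congr rfl fun m _ => MeasureTheory.integral_const_mul _ _
  -- combine
  show (∫ τ in S n, Wc M τ *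
        ((τ j - z j) / (1 - ∑ k, z k * (starRingEnd ℂ) (τ k)) +
          (w j - τ j) / (1 - ∑ k, w k * (starRingEnd ℂ) (τ k))) ^ N) = _
  rw [h1, h2, h3, Finset.mul_sum]
  refine Finset.sum_congr rfl fun m hm => ?_
  have hmN : m ≤ N := Finset.mem_range_succ_iff.mp hm
  have hzw : (z j - w j) ^ m = (-1 : ℂ) ^ m * (w j - z j) ^ m := by
    rw [← neg_pow, neg_sub]
  have hpow : (w j - z j) ^ (N - m) * (w j - z j) ^ m = (w j - z j) ^ N := by
    rw [← pow_add, Nat.sub_add_cancel hmN]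
  calc (w j - z j) ^ (N - m) * (N.choose m : ℂ) * ((z j - w j) ^ m * Q m)
      = ((w j - z j) ^ (N - m) * (w j - z j) ^ m) * ((-1 : ℂ) ^ m * (N.choose m : ℂ) * Q m) := by
        rw [hzw]; ring
    _ = (w j - z j) ^ N * ((-1 : ℂ) ^ m * (N.choose m : ℂ) * Q m) := by rw [hpow]

end BCRI

/-- For `N ≥ n+1`, `z, w` in the unit ball `B^n` and a fixed index `j`,
`∫_{B^n} (1-|τ|²)^{N-n-1} ((τⱼ-zⱼ)/(1-z·conj τ) + (wⱼ-τⱼ)/(1-w·conj τ))^N dV(τ)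
  = (wⱼ-zⱼ)^N ∫_{B^n} (1-|τ|²)^{N-n-1} (1-|τⱼ|²)^N dV(τ)`. -/
theorem ball_cross_ratio_integral (n N : ℕ) (hN : n + 1 ≤ N) (j : Fin n)
    (z w : Fin n → ℂ)
    (hz : ∑ k, ‖z k‖ ^ 2 < 1) (hw : ∑ k, ‖w k‖ ^ 2 < 1) :
    ∫ τ in {τ : Fin n → ℂ | ∑ k, ‖τ k‖ ^ 2 < 1},
      (((1 - ∑ k, ‖τ k‖ ^ 2 : ℝ) ^ (N - n - 1) : ℝ) : ℂ) *
        ((τ j - z j) / (1 - ∑ k, z k * (starRingEnd ℂ) (τ k)) +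
          (w j - τ j) / (1 - ∑ k, w k * (starRingEnd ℂ) (τ k))) ^ N
    = (w j - z j) ^ N *
        ∫ τ in {τ : Fin n → ℂ | ∑ k, ‖τ k‖ ^ 2 < 1},
          ((((1 - ∑ k, ‖τ k‖ ^ 2 : ℝ) ^ (N - n - 1)) * (1 - ‖τ j‖ ^ 2) ^ N : ℝ) : ℂ) :=
  BCRI.main_aux (N - n - 1) N j z w hz hw
end
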